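/- Let F be a field and let v₁, v₂ ∈ F^3 be linearly independent row vectors. Consider the 3-dimensional subspace T = { A ∈ Sym(3,F) : vᵢ A vⱼᵀ = 0 for all i, j ∈ {1,2} } of Sym(3, F). Then the rank-one matrices in T are exactly the nonzero scalar multiples of wᵀw, where w ∈ F^3 is a nonzero (and unique up to scalar) column vector with v₁ w = v₂ w = 0. In particular, every element of T is singular and the tangent plane T meets the Veronese surface in exactly one point. -/

import Mathlib

open Matrix

lemma cross_zero_imp {F : Type} [Field F] {w u : Fin 3 → F} (hw : w ≠ 0)
    (h : crossProduct w u = 0) : ∃ c : F, u = c • w := by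
  obtain ⟨k, hk⟩ := Function.ne_iff.mp hw
  have h0 := congrFun h 0
  have h1 := congrFun h 1
  have h2 := congrFun h 2
  simp [cross_apply] at h0 h1 h2
  refine ⟨u k / w k, funext fun i => ?_⟩
  simp only [Pi.smul_apply, smul_eq_mul]
  fin_cases k <;> fin_cases i <;> simp at hk ⊢ <;> field_simp <;>
    first
      | linear_combination h0 | linear_combination -h0
      | linear_combination h1 | linear_combination -h1
      | linear_combination h2 | linear_combination -h2

lemma triple_cross {F : Type} [Field F] (v₁ v₂ u : Fin 3 → F) :
    crossProduct (crossProduct v₁ v₂) u = (v₁ ⬝ᵥ u) • v₂ - (v₂ ⬝ᵥ u) • v₁ := by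
  funext i
  fin_cases i <;>
    simp [cross_apply, dotProduct, Fin.sum_univ_three] <;> ring

lemma dot_vecMulVec_mulVec {F : Type} [CommRing F] (a b c u : Fin 3 → F) :
    a ⬝ᵥ (vecMulVec b c *ᵥ u) = (a ⬝ᵥ b) * (c ⬝ᵥ u) := by
  simp [dotProduct, mulVec, vecMulVec_apply, Fin.sum_univ_three]
  ring

lemma smul_vecMulVec_mulVec {F : Type} [CommRing F] (c : F) (w u : Fin 3 → F) :
    (c • vecMulVec w w) *ᵥ u = (c * (w ⬝ᵥ u)) • w := by
  funext i
  simp [mulVec, dotProduct, vecMulVec_apply, Fin.sum_univ_three]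
  ring

lemma rank_one_of_smul_vecMulVec {F : Type} [Field F] {w : Fin 3 → F} {c : F}
    (hc : c ≠ 0) (hw : w ≠ 0) : (c • vecMulVec w w).rank = 1 := by
  classical
  obtain ⟨k, hk⟩ := Function.ne_iff.mp hw
  simp only [Pi.zero_apply] at hk
  rw [Matrix.rank, finrank_eq_one_iff']
  refine ⟨⟨(c * w k) • w, ⟨Pi.single k 1, ?_⟩⟩, ?_, ?_⟩
  · rw [mulVecLin_apply, smul_vecMulVec_mulVec, dotProduct_single, mul_one]
  · intro h
    exact smul_ne_zero (mul_ne_zero hc hk) hw (by simpa using congrArg Subtype.val h)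
  · rintro ⟨-, u, rfl⟩
    refine ⟨(w ⬝ᵥ u) / w k, Subtype.ext ?_⟩
    show ((w ⬝ᵥ u) / w k) • ((c * w k) • w) = (c • vecMulVec w w).mulVecLin u
    rw [mulVecLin_apply, smul_vecMulVec_mulVec, smul_smul]
    congr 1
    field_simp

lemma eq_smul_vecMulVec_of_rank_one {F : Type} [Field F] {A : Matrix (Fin 3) (Fin 3) F}
    (hsym : A.IsSymm) (hr : A.rank = 1) :
    ∃ (l : F) (x : Fin 3 → F), l ≠ 0 ∧ x ≠ 0 ∧ A = l • vecMulVec x x := by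
  classical
  have hr' := hr
  rw [Matrix.rank, finrank_eq_one_iff'] at hr'
  obtain ⟨⟨x, hxmem⟩, hx0, hxall⟩ := hr'
  have hx0' : x ≠ 0 := by
    intro h
    exact hx0 (Subtype.ext h)
  choose y hy using fun j => hxall ⟨A *ᵥ Pi.single j 1, ⟨Pi.single j 1, rfl⟩⟩
  have hAij : ∀ i j, A i j = y j * x i := by
    intro i j
    have := congrFun (congrArg Subtype.val (hy j)) i
    simp only [Submodule.coe_smul, Pi.smul_apply, smul_eq_mul] at this
    rw [Matrix.mulVec_single] at this
    simpa using this.symm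
  obtain ⟨k, hk⟩ := Function.ne_iff.mp hx0'
  simp only [Pi.zero_apply] at hk
  set l : F := y k / x k with hl_def
  have hy' : ∀ j, y j = l * x j := by
    intro j
    have h1 : A k j = A j k := (hsym.apply j k).symm ▸ rfl
    have h2 : y j * x k = y k * x j := by
      rw [← hAij k j, ← hAij j k] at *
      exact h1
    rw [hl_def, div_mul_eq_mul_div, eq_div_iff hk]
    linear_combination h2
  have hA : A = l • vecMulVec x x := by
    ext i j
    rw [hAij i j, hy' j]
    simp [vecMulVec_apply]
    ring
  have hl : l ≠ 0 := by
    intro h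
    rw [h, zero_smul] at hA
    rw [hA, Matrix.rank_zero] at hr
    exact one_ne_zero hr.symm
  exact ⟨l, x, hl, hx0', hA⟩

/-- For linearly independent row vectors `v₁, v₂ ∈ F^3`, the rank-one
matrices of the tangent plane `T = {A ∈ Sym(3,F) : vᵢ A vⱼᵀ = 0}` are exactly the
nonzero scalar multiples of `wᵀw`, where `w` is the (up to scalar unique) nonzero
column vector with `v₁ w = v₂ w = 0`; in particular every element of `T` is
singular, and `T` meets the Veronese surface in exactly one point. -/
theorem tangent_plane_rank_one_elements
    (F : Type) [Field F] (v₁ v₂ : Fin 3 → F)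
    (hind : LinearIndependent F ![v₁, v₂]) :
    ∃ w : Fin 3 → F, w ≠ 0 ∧ v₁ ⬝ᵥ w = 0 ∧ v₂ ⬝ᵥ w = 0 ∧
      (∀ w' : Fin 3 → F, w' ≠ 0 → v₁ ⬝ᵥ w' = 0 → v₂ ⬝ᵥ w' = 0 →
        ∃ c : F, w' = c • w) ∧
      (∀ A : Matrix (Fin 3) (Fin 3) F, A.IsSymm →
        (∀ i j : Fin 2, ![v₁, v₂] i ⬝ᵥ A *ᵥ ![v₁, v₂] j = 0) →
          A.det = 0 ∧
          (A.rank = 1 ↔ ∃ c : F, c ≠ 0 ∧ A = c • vecMulVec w w)) := by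
  classical
  have hind' : ∀ g : Fin 2 → F, g 0 • v₁ + g 1 • v₂ = 0 → ∀ i, g i = 0 := by
    intro g hg i
    refine Fintype.linearIndependent_iff.mp hind g ?_ i
    simpa [Fin.sum_univ_two] using hg
  set w : Fin 3 → F := crossProduct v₁ v₂ with hw_def
  have hw1 : v₁ ⬝ᵥ w = 0 := dot_self_cross _ _
  have hw2 : v₂ ⬝ᵥ w = 0 := dot_cross_self _ _
  have hwne : w ≠ 0 := by
    intro hz
    by_cases hv2 : v₂ = 0
    · have := hind' ![0, 1] (by simp [hv2]) 1; simp at this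
    · have hzz : crossProduct v₂ v₁ = 0 := by
        have hac : crossProduct v₂ v₁ = -(crossProduct v₁ v₂) := (cross_anticomm v₁ v₂).symm
        rw [hac, ← hw_def, hz, neg_zero]
      obtain ⟨c, hc⟩ := cross_zero_imp hv2 hzz
      have := hind' ![1, -c] (by simp [hc]) 0
      simp at this
  have hspan : ∀ u : Fin 3 → F, v₁ ⬝ᵥ u = 0 → v₂ ⬝ᵥ u = 0 → ∃ c : F, u = c • w := by
    intro u hu1 hu2
    refine cross_zero_imp hwne ?_
    rw [hw_def, triple_cross, hu1, hu2]
    simp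
  refine ⟨w, hwne, hw1, hw2, fun w' _ h1 h2 => hspan w' h1 h2, ?_⟩
  intro A hsym hA
  have h00 : v₁ ⬝ᵥ A *ᵥ v₁ = 0 := by simpa using hA 0 0
  have h10 : v₂ ⬝ᵥ A *ᵥ v₁ = 0 := by simpa using hA 1 0
  have h01 : v₁ ⬝ᵥ A *ᵥ v₂ = 0 := by simpa using hA 0 1
  have h11 : v₂ ⬝ᵥ A *ᵥ v₂ = 0 := by simpa using hA 1 1
  obtain ⟨α, hα⟩ := hspan (A *ᵥ v₁) h00 h10
  obtain ⟨β, hβ⟩ := hspan (A *ᵥ v₂) h01 h11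
  constructor
  · rw [← Matrix.exists_mulVec_eq_zero_iff]
    by_cases hα0 : α = 0
    · refine ⟨v₁, ?_, by rw [hα, hα0, zero_smul]⟩
      intro hz
      have := hind' ![1, 0] (by simp [hz]) 0
      simp at this
    · refine ⟨β • v₁ - α • v₂, ?_, ?_⟩
      · intro hz
        have hz' : β • v₁ + (-α) • v₂ = 0 := by
          rw [neg_smul, ← sub_eq_add_neg]; exact hz
        have := hind' ![β, -α] (by simpa using hz') 1
        simp at this
        exact hα0 (neg_eq_zero.mp (by simpa using this))
      · rw [Matrix.mulVec_sub, Matrix.mulVec_smul, Matrix.mulVec_smul, hα, hβ,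
          smul_smul, smul_smul, mul_comm, sub_self]
  · constructor
    · intro hr
      obtain ⟨l, x, hl, hx, hAeq⟩ := eq_smul_vecMulVec_of_rank_one hsym hr
      have key : ∀ v : Fin 3 → F, v ⬝ᵥ A *ᵥ v = 0 → v ⬝ᵥ x = 0 := by
        intro v hv
        rw [hAeq, Matrix.smul_mulVec, dotProduct_smul,
          dot_vecMulVec_mulVec, dotProduct_comm x v] at hv
        rcases mul_eq_zero.mp hv with h | h
        · exact absurd h hl
        · exact mul_self_eq_zero.mp h
      obtain ⟨μ, hμ⟩ := hspan x (key v₁ h00) (key v₂ h11)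
      have hμ0 : μ ≠ 0 := by
        rintro rfl
        rw [zero_smul] at hμ
        exact hx hμ
      refine ⟨l * (μ * μ), mul_ne_zero hl (mul_ne_zero hμ0 hμ0), ?_⟩
      rw [hAeq, hμ]
      ext i j
      simp [vecMulVec_apply]
      ring
    · rintro ⟨c, hc, rfl⟩
      exact rank_one_of_smul_vecMulVec hc hwne
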